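/- If $\mu = \mathbb{P}$ (so $\mu$ need not dominate $\mathbb{Q}$ symmetrically), then the squared Fisher IPM equals the Pearson chi-squared divergence: $\mathcal{F}^2_{\mathbb{P}}(\mathbb{P},\mathbb{Q}) = \int_{\mathcal{X}} \frac{(\mathbb{P}(x)-\mathbb{Q}(x))^2}{\mathbb{P}(x)}\,dx$. -/

import Mathlib

open MeasureTheory

/-- With dominant measure `μ = P`, the squared Fisher IPM equals the Pearson chi-squared
divergence `∫ (P - Q)² / P`. -/
theorem fisher_ipm_mu_eq_P_pearson
    {α : Type*} [MeasurableSpace α] (ν : Measure α) [SigmaFinite ν]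
    (P Q : α → ℝ)
    (hP : ∀ x, 0 < P x) (hPmeas : Measurable P) (hP1 : ∫ x, P x ∂ν = 1)
    (hQ : ∀ x, 0 ≤ Q x) (hQmeas : Measurable Q) (hQ1 : ∫ x, Q x ∂ν = 1)
    (hL2 : Integrable (fun x => (P x - Q x) ^ 2 / P x) ν) :
    (sSup {y : ℝ | ∃ f : α → ℝ, Measurable f ∧
        Integrable (fun x => f x ^ 2 * P x) ν ∧
        (∫ x, f x ^ 2 * P x ∂ν) ≤ 1 ∧
        y = ∫ x, f x * (P x - Q x) ∂ν}) ^ 2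
      = ∫ x, (P x - Q x) ^ 2 / P x ∂ν := by
  set C : ℝ := ∫ x, (P x - Q x) ^ 2 / P x ∂ν with hC
  have hC0 : 0 ≤ C := integral_nonneg fun x =>
    div_nonneg (sq_nonneg _) (hP x).le
  set s := {y : ℝ | ∃ f : α → ℝ, Measurable f ∧
      Integrable (fun x => f x ^ 2 * P x) ν ∧
      (∫ x, f x ^ 2 * P x ∂ν) ≤ 1 ∧
      y = ∫ x, f x * (P x - Q x) ∂ν} with hs
  -- h-function L² fact
  have hhsq : ∀ x, ((P x - Q x) / Real.sqrt (P x)) ^ 2 = (P x - Q x) ^ 2 / P x := by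
    intro x
    rw [div_pow, Real.sq_sqrt (hP x).le]
  have hhmeas : Measurable fun x => (P x - Q x) / Real.sqrt (P x) :=
    (hPmeas.sub hQmeas).div hPmeas.sqrt
  have hhL2 : MemLp (fun x => (P x - Q x) / Real.sqrt (P x)) 2 ν := by
    rw [memLp_two_iff_integrable_sq hhmeas.aestronglyMeasurable]
    simpa only [hhsq] using hL2
  -- upper bound
  have key : ∀ y ∈ s, y ≤ Real.sqrt C := by
    rintro y ⟨f, hf, hint, h1, rfl⟩
    set g : α → ℝ := fun x => f x * Real.sqrt (P x) with hgdef
    set h : α → ℝ := fun x => (P x - Q x) / Real.sqrt (P x) with hhdef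
    have hsP : ∀ x, Real.sqrt (P x) ≠ 0 := fun x =>
      ne_of_gt (Real.sqrt_pos.mpr (hP x))
    have hg2 : ∀ x, g x ^ 2 = f x ^ 2 * P x := by
      intro x
      rw [hgdef]
      rw [mul_pow, Real.sq_sqrt (hP x).le]
    have hgmeas : Measurable g := hf.mul hPmeas.sqrt
    have hgL2 : MemLp g 2 ν := by
      rw [memLp_two_iff_integrable_sq hgmeas.aestronglyMeasurable]
      simpa only [hg2] using hint
    have hgh : ∀ x, f x * (P x - Q x) = g x * h x := by
      intro x
      simp only [hgdef, hhdef]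
      rw [mul_div_assoc', mul_right_comm, mul_div_assoc, div_self (hsP x), mul_one]
    have h2 : (2 : ℝ).HolderConjugate 2 := Real.HolderConjugate.two_two
    have hofReal : ENNReal.ofReal (2 : ℝ) = 2 := by
      simp [ENNReal.ofReal_ofNat]
    have hholder := integral_mul_norm_le_Lp_mul_Lq (μ := ν) h2
      (hofReal ▸ hgL2) (hofReal ▸ hhL2)
    have hpow2 : ∀ u : ℝ, ‖u‖ ^ (2 : ℝ) = u ^ 2 := by
      intro u
      rw [show ((2 : ℝ) = ((2 : ℕ) : ℝ)) by norm_num, Real.rpow_natCast]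
      simp [sq_abs]
    calc ∫ x, f x * (P x - Q x) ∂ν = ∫ x, g x * h x ∂ν := by
          simp only [hgh]
      _ ≤ ‖∫ x, g x * h x ∂ν‖ := le_abs_self _
      _ ≤ ∫ x, ‖g x * h x‖ ∂ν := norm_integral_le_integral_norm _
      _ = ∫ x, ‖g x‖ * ‖h x‖ ∂ν := by simp only [norm_mul]
      _ ≤ (∫ x, ‖g x‖ ^ (2 : ℝ) ∂ν) ^ (1 / (2:ℝ)) *
          (∫ x, ‖h x‖ ^ (2 : ℝ) ∂ν) ^ (1 / (2:ℝ)) := hholder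
      _ = Real.sqrt (∫ x, g x ^ 2 ∂ν) * Real.sqrt (∫ x, h x ^ 2 ∂ν) := by
          simp only [hpow2, Real.sqrt_eq_rpow]
      _ = Real.sqrt (∫ x, f x ^ 2 * P x ∂ν) * Real.sqrt C := by
          simp only [hg2, hhdef, hhsq, hC]
      _ ≤ 1 * Real.sqrt C := by
          gcongr
          calc Real.sqrt (∫ x, f x ^ 2 * P x ∂ν) ≤ Real.sqrt 1 :=
                Real.sqrt_le_sqrt h1
            _ = 1 := Real.sqrt_one
      _ = Real.sqrt C := one_mul _
  have hne : s.Nonempty := by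
    refine ⟨0, (fun _ => 0), measurable_const, ?_, ?_, ?_⟩ <;> simp
  have hbdd : BddAbove s := ⟨Real.sqrt C, key⟩
  have hmem : Real.sqrt C ∈ s := by
    rcases eq_or_lt_of_le hC0 with hC0' | hCpos
    · refine ⟨(fun _ => 0), measurable_const, ?_, ?_, ?_⟩ <;> simp [← hC0']
    · refine ⟨fun x => (P x - Q x) / (P x * Real.sqrt C), ?_, ?_, ?_, ?_⟩
      · exact (hPmeas.sub hQmeas).div (hPmeas.mul measurable_const)
      · have heq : ∀ x, ((P x - Q x) / (P x * Real.sqrt C)) ^ 2 * P x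
            = ((P x - Q x) ^ 2 / P x) / C := by
          intro x
          have hPx := (hP x).ne'
          have hsC : Real.sqrt C ≠ 0 := ne_of_gt (Real.sqrt_pos.mpr hCpos)
          have hsC2 : Real.sqrt C * Real.sqrt C = C := Real.mul_self_sqrt hC0
          field_simp
          rw [Real.sq_sqrt hC0]
        simp only [heq]
        exact hL2.div_const C
      · have heq : ∀ x, ((P x - Q x) / (P x * Real.sqrt C)) ^ 2 * P x
            = ((P x - Q x) ^ 2 / P x) / C := by
          intro x
          have hPx := (hP x).ne'
          have hsC : Real.sqrt C ≠ 0 := ne_of_gt (Real.sqrt_pos.mpr hCpos)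
          field_simp
          rw [Real.sq_sqrt hC0]
        simp only [heq]
        rw [integral_div, ← hC, div_self (ne_of_gt hCpos)]
      · have heq : ∀ x, ((P x - Q x) / (P x * Real.sqrt C)) * (P x - Q x)
            = ((P x - Q x) ^ 2 / P x) / Real.sqrt C := by
          intro x
          have hPx := (hP x).ne'
          have hsC : Real.sqrt C ≠ 0 := ne_of_gt (Real.sqrt_pos.mpr hCpos)
          field_simp
        simp only [heq]
        rw [integral_div, ← hC, Real.div_sqrt]
  have hsup : sSup s = Real.sqrt C :=
    le_antisymm (csSup_le hne key) (le_csSup hbdd hmem)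
  rw [hsup, Real.sq_sqrt hC0]
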